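/- Let the sortition instance be κ-rich for some κ > 0, with n = |N| pool members and panel size k ≥ 1. Then under the uniform distribution over the set 𝒫 of panels, every pool member's selection probability satisfies π(i) = |𝒫(i)|/|𝒫| ≤ k/(κ^k · n). -/

import Mathlib

open scoped Classical

section AuxCount

lemma extend_count {β : Type*} [DecidableEq β] [Fintype β] (A : β → Finset β) (d : β) (b K : ℕ) :
    ∀ s : Finset β, s.card ≤ K → (∀ a ∈ s, K + b ≤ (A a).card) →
    (b + 1) ^ s.card ≤ (Finset.univ.filter (fun g : β → β =>
      Set.InjOn g ↑s ∧ (∀ a ∈ s, g a ∈ A a) ∧ ∀ a ∉ s, g a = d)).card := by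
  intro s
  induction s using Finset.induction_on with
  | empty =>
    intro _ _
    simp only [Finset.card_empty, pow_zero]
    refine Finset.card_pos.mpr ⟨fun _ => d, ?_⟩
    simp [Set.InjOn]
  | @insert j s hj ih =>
    intro hsK hA
    have hscard : (insert j s).card = s.card + 1 := Finset.card_insert_of_notMem hj
    have hsK' : s.card ≤ K := by omega
    have hA' : ∀ a ∈ s, K + b ≤ (A a).card := fun a ha => hA a (Finset.mem_insert_of_mem ha)
    set E : Finset β → Finset (β → β) := fun t => Finset.univ.filter (fun g : β → β =>
      Set.InjOn g ↑t ∧ (∀ a ∈ t, g a ∈ A a) ∧ ∀ a ∉ t, g a = d) with hE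
    have hmem : ∀ t (g : β → β), g ∈ E t ↔
        Set.InjOn g ↑t ∧ (∀ a ∈ t, g a ∈ A a) ∧ ∀ a ∉ t, g a = d := by
      intro t g; simp [hE]
    set T : Finset (β → β) :=
      (E s).biUnion (fun g => (A j \ s.image g).image (fun x => Function.update g j x)) with hT
    have hsub : T ⊆ E (insert j s) := by
      intro h hh
      rw [hT, Finset.mem_biUnion] at hh
      obtain ⟨g, hg, hh⟩ := hh
      rw [Finset.mem_image] at hh
      obtain ⟨x, hx, rfl⟩ := hh
      rw [Finset.mem_sdiff] at hx
      obtain ⟨hxA, hxim⟩ := hx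
      rw [hmem] at hg
      obtain ⟨ginj, gmem, gd⟩ := hg
      have hval : ∀ a ∈ s, Function.update g j x a = g a := by
        intro a ha
        exact Function.update_of_ne (by rintro rfl; exact hj ha) _ _
      rw [hmem]
      refine ⟨?_, ?_, ?_⟩
      · intro a ha a' ha' heq
        simp only [Finset.coe_insert, Set.mem_insert_iff] at ha ha'
        rcases ha with rfl | ha <;> rcases ha' with rfl | ha'
        · rfl
        · exfalso
          rw [Function.update_self, hval a' ha'] at heq
          exact hxim (Finset.mem_image.mpr ⟨a', ha', heq.symm⟩)
        · exfalso
          rw [Function.update_self, hval a ha] at heq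
          exact hxim (Finset.mem_image.mpr ⟨a, ha, heq⟩)
        · rw [hval a ha, hval a' ha'] at heq
          exact ginj ha ha' heq
      · intro a ha
        rcases Finset.mem_insert.mp ha with rfl | ha
        · rwa [Function.update_self]
        · rw [hval a ha]; exact gmem a ha
      · intro a ha
        have haj : a ≠ j := fun h => ha (h ▸ Finset.mem_insert_self j s)
        have has : a ∉ s := fun h => ha (Finset.mem_insert_of_mem h)
        rw [Function.update_of_ne haj]; exact gd a has
    have hdisj : ∀ g₁ ∈ E s, ∀ g₂ ∈ E s, g₁ ≠ g₂ →
        Disjoint ((A j \ s.image g₁).image (fun x => Function.update g₁ j x))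
          ((A j \ s.image g₂).image (fun x => Function.update g₂ j x)) := by
      intro g₁ hg₁ g₂ hg₂ hne
      rw [Finset.disjoint_left]
      intro h hh1 hh2
      rw [Finset.mem_image] at hh1 hh2
      obtain ⟨x₁, _, rfl⟩ := hh1
      obtain ⟨x₂, _, heq⟩ := hh2
      apply hne
      rw [hmem] at hg₁ hg₂
      funext a
      by_cases haj : a = j
      · subst haj
        rw [hg₁.2.2 a hj, hg₂.2.2 a hj]
      · have := congrFun heq a
        rw [Function.update_of_ne haj, Function.update_of_ne haj] at this
        exact this.symm
    have hcards : ∀ g ∈ E s,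
        ((A j \ s.image g).image (fun x => Function.update g j x)).card
          = (A j \ s.image g).card := by
      intro g _
      apply Finset.card_image_of_injOn
      intro x _ y _ hxy
      have := congrFun hxy j
      simpa using this
    have hlow : ∀ g ∈ E s, b + 1 ≤ (A j \ s.image g).card := by
      intro g _
      have h1 : (A j).card - (s.image g).card ≤ (A j \ s.image g).card :=
        Finset.le_card_sdiff _ _
      have h2 : (s.image g).card ≤ s.card := Finset.card_image_le
      have h3 : K + b ≤ (A j).card := hA j (Finset.mem_insert_self j s)
      omega
    calc (b + 1) ^ (insert j s).card = (b + 1) ^ s.card * (b + 1) := by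
          rw [hscard, pow_succ]
      _ ≤ (E s).card * (b + 1) := Nat.mul_le_mul_right _ (ih hsK' hA')
      _ = ∑ _g ∈ E s, (b + 1) := by rw [Finset.sum_const, smul_eq_mul]
      _ ≤ ∑ g ∈ E s, ((A j \ s.image g).image (fun x => Function.update g j x)).card := by
          refine Finset.sum_le_sum fun g hg => ?_
          rw [hcards g hg]; exact hlow g hg
      _ = T.card := (Finset.card_biUnion hdisj).symm
      _ ≤ (E (insert j s)).card := Finset.card_le_card hsub

end AuxCount

/-- A sortition instance (features `feat`, panel set `Pan`, panel size `k`) is `κ`-rich if there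
is a set `Wstar` of feature-value vectors present in the pool such that every vector in `Wstar`
is shared by at least `κ·n + k` pool members, and some panel consists solely of members with
vectors in `Wstar`. -/
def IsRich {N : Type*} [Fintype N] {F : Type*} {V : F → Type*}
    (feat : N → ∀ f : F, V f) (Pan : Finset (Finset N)) (k : ℕ) (κ : ℝ) : Prop :=
  ∃ Wstar : Set (∀ f : F, V f),
    (∀ wv ∈ Wstar, ∃ i : N, feat i = wv) ∧
    (∀ wv ∈ Wstar,
      κ * (Fintype.card N) + k ≤ ((Finset.univ.filter fun i : N => feat i = wv).card : ℝ)) ∧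
    ∃ P₀ ∈ Pan, ∀ i ∈ P₀, feat i ∈ Wstar

/-- In a `κ`-rich sortition instance with `n` pool members and panel size
`k ≥ 1`, under the uniform distribution over the panel set every pool member's selection
probability satisfies `π(i) = |Pan(i)|/|Pan| ≤ k/(κ^k · n)`. -/
theorem uniform_selection_probability_bound
    {N : Type*} [Fintype N] [DecidableEq N]
    {F : Type*} {V : F → Type*}
    (feat : N → ∀ f : F, V f) (k : ℕ) (hk : 1 ≤ k)
    (ℓ u : ((f : F) × V f) → ℕ)
    (Pan : Finset (Finset N))
    (hPan : Pan = Finset.univ.filter fun P : Finset N =>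
      P.card = k ∧ ∀ (f : F) (v : V f),
        ℓ ⟨f, v⟩ ≤ (P.filter fun t => feat t f = v).card ∧
        (P.filter fun t => feat t f = v).card ≤ u ⟨f, v⟩)
    (κ : ℝ) (hκ : 0 < κ) (hrich : IsRich feat Pan k κ) :
    ∀ i : N, ((Pan.filter fun P => i ∈ P).card : ℝ) / Pan.card ≤
      k / (κ ^ k * Fintype.card N) := by
  unfold IsRich at hrich
  classical
  intro i
  obtain ⟨Wstar, hpres, hsize, P₀, hP₀Pan, hP₀W⟩ := hrich
  have hP₀ := hP₀Pan
  rw [hPan, Finset.mem_filter] at hP₀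
  obtain ⟨-, hP₀card, hP₀quota⟩ := hP₀
  set n := Fintype.card N with hn
  have hn1 : 0 < n := Fintype.card_pos_iff.mpr ⟨i⟩
  set b := ⌈κ * n⌉₊ with hbdef
  set A : N → Finset N := fun a => Finset.univ.filter (fun t => feat t = feat a) with hAdef
  have hAbound : ∀ a ∈ P₀, k + b ≤ (A a).card := by
    intro a ha
    have h1 : κ * n + k ≤ ((A a).card : ℝ) := hsize _ (hP₀W a ha)
    have h2 : ⌈κ * (n : ℝ) + (k : ℕ)⌉₊ ≤ (A a).card := Nat.ceil_le.mpr h1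
    rw [Nat.ceil_add_natCast (by positivity)] at h2
    omega
  have hcount := extend_count A i b k P₀ (le_of_eq hP₀card) hAbound
  rw [hP₀card] at hcount
  set E : Finset (N → N) := Finset.univ.filter (fun g : N → N =>
      Set.InjOn g ↑P₀ ∧ (∀ a ∈ P₀, g a ∈ A a) ∧ ∀ a ∉ P₀, g a = i) with hEdef
  -- every g ∈ E yields a panel
  have hEmem : ∀ g : N → N, g ∈ E ↔
      Set.InjOn g ↑P₀ ∧ (∀ a ∈ P₀, g a ∈ A a) ∧ ∀ a ∉ P₀, g a = i := by
    intro g; simp [hEdef]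
  have hgfeat : ∀ g ∈ E, ∀ a ∈ P₀, feat (g a) = feat a := by
    intro g hg a ha
    have := ((hEmem g).mp hg).2.1 a ha
    rw [hAdef] at this
    simpa using (Finset.mem_filter.mp this).2
  have hmapsto : ∀ g ∈ E, P₀.image g ∈ Pan := by
    intro g hg
    obtain ⟨ginj, gmem, -⟩ := (hEmem g).mp hg
    rw [hPan, Finset.mem_filter]
    refine ⟨Finset.mem_univ _, ?_, ?_⟩
    · rw [Finset.card_image_of_injOn ginj, hP₀card]
    · intro f v
      have hfilt : (P₀.image g).filter (fun t => feat t f = v)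
          = (P₀.filter (fun a => feat a f = v)).image g := by
        ext t
        simp only [Finset.mem_filter, Finset.mem_image]
        constructor
        · rintro ⟨⟨a, ha, rfl⟩, hfv⟩
          exact ⟨a, ⟨ha, by rw [← hgfeat g hg a ha]; exact hfv⟩, rfl⟩
        · rintro ⟨a, ⟨ha, hfv⟩, rfl⟩
          exact ⟨⟨a, ha, rfl⟩, by rw [hgfeat g hg a ha]; exact hfv⟩
      rw [hfilt, Finset.card_image_of_injOn
        (ginj.mono (Finset.coe_subset.mpr (Finset.filter_subset _ _)))]
      exact hP₀quota f v
  -- fibers of g ↦ P₀.image g have size ≤ k!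
  have hfiber : ∀ Q ∈ Pan, (E.filter (fun g => P₀.image g = Q)).card ≤ Nat.factorial k := by
    intro Q hQ
    have hQcard : Q.card = k := by
      rw [hPan, Finset.mem_filter] at hQ; exact hQ.2.1
    have hcardPQ : Fintype.card (↥P₀) ≤ Fintype.card (↥Q) := by
      rw [Fintype.card_coe, Fintype.card_coe, hP₀card, hQcard]
    have hne : Nonempty (↥P₀ ↪ ↥Q) := Function.Embedding.nonempty_iff_card_le.mpr hcardPQ
    set φ : (N → N) → (↥P₀ ↪ ↥Q) := fun g =>
      if h : Set.InjOn g ↑P₀ ∧ P₀.image g = Q then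
        ⟨fun a => ⟨g a, by rw [← h.2]; exact Finset.mem_image_of_mem g a.2⟩,
          fun a a' haa => Subtype.ext (h.1 a.2 a'.2 (congrArg Subtype.val haa))⟩
      else Classical.choice hne with hφdef
    have :(E.filter (fun g => P₀.image g = Q)).card ≤
        (Finset.univ : Finset (↥P₀ ↪ ↥Q)).card := by
      apply Finset.card_le_card_of_injOn φ (fun _ _ => Finset.mem_univ _)
      intro g hg g' hg' hφ
      rw [Finset.mem_coe, Finset.mem_filter] at hg hg'
      have cg : Set.InjOn g ↑P₀ ∧ P₀.image g = Q := ⟨((hEmem g).mp hg.1).1, hg.2⟩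
      have cg' : Set.InjOn g' ↑P₀ ∧ P₀.image g' = Q := ⟨((hEmem g').mp hg'.1).1, hg'.2⟩
      rw [hφdef] at hφ
      simp only [dif_pos cg, dif_pos cg'] at hφ
      funext a
      by_cases ha : a ∈ P₀
      · have := congrFun (congrArg (fun (e : ↥P₀ ↪ ↥Q) => (e : ↥P₀ → ↥Q)) hφ) ⟨a, ha⟩
        exact congrArg Subtype.val this
      · rw [((hEmem g).mp hg.1).2.2 a ha, ((hEmem g').mp hg'.1).2.2 a ha]
    rw [Finset.card_univ, Fintype.card_embedding_eq, Fintype.card_coe, Fintype.card_coe,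
      hP₀card, hQcard, Nat.descFactorial_self] at this
    exact this
  have hEcard : E.card ≤ Nat.factorial k * Pan.card :=
    Finset.card_le_mul_card_image_of_maps_to hmapsto _ hfiber
  -- panels containing i
  have hMi : (Pan.filter (fun P => i ∈ P)).card ≤ (n - 1).choose (k - 1) := by
    have h1 : (Pan.filter (fun P => i ∈ P)).card
        ≤ ((Finset.univ.erase i).powersetCard (k - 1)).card := by
      apply Finset.card_le_card_of_injOn (fun P => P.erase i)
      · intro P hP
        rw [Finset.mem_coe, Finset.mem_filter] at hP
        obtain ⟨hPPan, hiP⟩ := hP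
        rw [hPan, Finset.mem_filter] at hPPan
        rw [Finset.mem_coe, Finset.mem_powersetCard]
        exact ⟨Finset.erase_subset_erase i (Finset.subset_univ P),
          by rw [Finset.card_erase_of_mem hiP, hPPan.2.1]⟩
      · intro P hP P' hP' hPP
        rw [Finset.mem_coe, Finset.mem_filter] at hP hP'
        rw [← Finset.insert_erase hP.2, ← Finset.insert_erase hP'.2]
        exact congrArg (insert i) hPP
    rwa [Finset.card_powersetCard, Finset.card_erase_of_mem (Finset.mem_univ i),
      Finset.card_univ, ← hn] at h1
  have hchoose : (k - 1).factorial * ((n - 1).choose (k - 1)) ≤ n ^ (k - 1) :=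
    calc (k - 1).factorial * ((n - 1).choose (k - 1)) = (n - 1).descFactorial (k - 1) :=
          (Nat.descFactorial_eq_factorial_mul_choose _ _).symm
      _ ≤ (n - 1) ^ (k - 1) := Nat.descFactorial_le_pow _ _
      _ ≤ n ^ (k - 1) := Nat.pow_le_pow_left (Nat.sub_le n 1) _
  have hPanpos : 0 < Pan.card := Finset.card_pos.mpr ⟨P₀, hP₀Pan⟩
  -- real arithmetic
  set M := (Pan.filter (fun P => i ∈ P)).card with hMdef
  have hn0 : (0 : ℝ) < n := by exact_mod_cast hn1
  have hPc0 : (0 : ℝ) < (Pan.card : ℝ) := by exact_mod_cast hPanpos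
  rw [div_le_div_iff₀ hPc0 (by positivity)]
  have hk' : k - 1 + 1 = k := Nat.succ_pred_eq_of_pos hk
  have hκn : κ * n ≤ (b : ℝ) + 1 := by
    refine le_trans (Nat.le_ceil _) ?_
    exact_mod_cast Nat.le_succ b
  have c1 : (κ * n) ^ k ≤ ((b + 1 : ℕ) : ℝ) ^ k := by
    push_cast
    exact pow_le_pow_left₀ (mul_nonneg hκ.le hn0.le) hκn k
  have c2 : (((b + 1) ^ k : ℕ) : ℝ) ≤ (E.card : ℝ) := by exact_mod_cast hcount
  have c3 : (E.card : ℝ) ≤ (Nat.factorial k : ℝ) * Pan.card := by exact_mod_cast hEcard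
  have c4 : (M : ℝ) * (Nat.factorial k : ℝ) ≤ (k : ℝ) * (n : ℝ) ^ (k - 1) := by
    have hnat : M * Nat.factorial k ≤ k * n ^ (k - 1) :=
      calc M * Nat.factorial k ≤ ((n - 1).choose (k - 1)) * Nat.factorial k :=
            Nat.mul_le_mul_right _ hMi
        _ = ((n - 1).choose (k - 1)) * (k * (k - 1).factorial) := by
            rw [Nat.mul_factorial_pred (by omega)]
        _ = k * ((k - 1).factorial * ((n - 1).choose (k - 1))) := by ring
        _ ≤ k * n ^ (k - 1) := Nat.mul_le_mul_left _ hchoose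
    exact_mod_cast hnat
  have hnk : (n : ℝ) ^ k = (n : ℝ) ^ (k - 1) * n := by
    conv_lhs => rw [← hk']
    rw [pow_succ]
  have key : (M : ℝ) * (κ ^ k * n) * (n : ℝ) ^ (k - 1) ≤ (k : ℝ) * Pan.card * (n : ℝ) ^ (k - 1) :=
    calc (M : ℝ) * (κ ^ k * n) * (n : ℝ) ^ (k - 1) = (M : ℝ) * (κ * n) ^ k := by
          rw [mul_pow, hnk]; ring
      _ ≤ (M : ℝ) * ((Nat.factorial k : ℝ) * Pan.card) := by
          refine mul_le_mul_of_nonneg_left ?_ (Nat.cast_nonneg M)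
          refine le_trans c1 (le_trans ?_ c3)
          push_cast at c2 ⊢
          exact c2
      _ = ((M : ℝ) * (Nat.factorial k : ℝ)) * Pan.card := by ring
      _ ≤ ((k : ℝ) * (n : ℝ) ^ (k - 1)) * Pan.card :=
          mul_le_mul_of_nonneg_right c4 hPc0.le
      _ = (k : ℝ) * Pan.card * (n : ℝ) ^ (k - 1) := by ring
  exact le_of_mul_le_mul_right key (pow_pos hn0 _)
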